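/- Let n, m ≥ 1 and let Ω, A, R, Rd, Q be real n×n matrices, B a real n×m matrix, Γ a real m×m matrix, and κ ≥ 0 a real number, such that: Q is symmetric positive definite; Γ is symmetric positive definite; R is symmetric positive semidefinite; and the projected Riccati identity Ωᵀ (Rd + Aᵀ R + R A + Q + κ R − R B Γ⁻¹ Bᵀ R) Ω = 0 holds. Let w ∈ ℝⁿ satisfy Ω w = w and w ≠ 0. Then, with the closed-loop matrix A_cl := A − B Γ⁻¹ Bᵀ R, one has wᵀ (Rd + A_clᵀ R + R A_cl) w = −wᵀ (Q + κ R + R B Γ⁻¹ Bᵀ R) w < 0. -/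

import Mathlib

open Matrix

/-- Pointwise algebraic core of Theorem 1: if `R` is symmetric PSD and satisfies the
projected Riccati identity `Ωᵀ(Rd + AᵀR + RA + Q + κR − RBΓ⁻¹BᵀR)Ω = 0`, then for any
nonzero `w` with `Ω w = w`, the closed-loop matrix `A_cl = A − BΓ⁻¹BᵀR` satisfies
`wᵀ(Rd + A_clᵀR + RA_cl)w = −wᵀ(Q + κR + RBΓ⁻¹BᵀR)w < 0`. -/
theorem projected_riccati_lyapunov_core (n m : ℕ) (hn : 1 ≤ n) (hm : 1 ≤ m)
    (Om A R Rd Q : Matrix (Fin n) (Fin n) ℝ)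
    (B : Matrix (Fin n) (Fin m) ℝ) (Γ : Matrix (Fin m) (Fin m) ℝ)
    (κ : ℝ) (hκ : 0 ≤ κ)
    (hQ : Q.PosDef) (hΓ : Γ.PosDef) (hR : R.PosSemidef)
    (hRic : Omᵀ * (Rd + Aᵀ * R + R * A + Q + κ • R - R * B * Γ⁻¹ * Bᵀ * R) * Om = 0)
    (w : Fin n → ℝ) (hw : Om *ᵥ w = w) (hwne : w ≠ 0) :
    w ⬝ᵥ ((Rd + (A - B * Γ⁻¹ * Bᵀ * R)ᵀ * R + R * (A - B * Γ⁻¹ * Bᵀ * R)) *ᵥ w) =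
      -(w ⬝ᵥ ((Q + κ • R + R * B * Γ⁻¹ * Bᵀ * R) *ᵥ w)) ∧
    -(w ⬝ᵥ ((Q + κ • R + R * B * Γ⁻¹ * Bᵀ * R) *ᵥ w)) < 0 := by
  have hRsym : Rᵀ = R := hR.1
  have hΓsym : Γᵀ = Γ := hΓ.1
  have hΓinv : (Γ⁻¹)ᵀ = Γ⁻¹ := by
    rw [Matrix.transpose_nonsing_inv, hΓsym]
  -- key scalar identity from the projected Riccati equation
  have key : w ⬝ᵥ ((Rd + Aᵀ * R + R * A + Q + κ • R - R * B * Γ⁻¹ * Bᵀ * R) *ᵥ w) = 0 := by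
    have h := congrArg (fun M => w ⬝ᵥ (M *ᵥ w)) hRic
    simp only [Matrix.zero_mulVec, dotProduct_zero] at h
    have e : w ⬝ᵥ ((Omᵀ * (Rd + Aᵀ * R + R * A + Q + κ • R - R * B * Γ⁻¹ * Bᵀ * R) * Om) *ᵥ w)
        = w ⬝ᵥ ((Rd + Aᵀ * R + R * A + Q + κ • R - R * B * Γ⁻¹ * Bᵀ * R) *ᵥ w) := by
      rw [← Matrix.mulVec_mulVec, ← Matrix.mulVec_mulVec, hw, Matrix.dotProduct_mulVec,
        Matrix.vecMul_transpose, hw]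
    rw [← e, h]
  set S := R * B * Γ⁻¹ * Bᵀ * R with hS
  have hScl : (A - B * Γ⁻¹ * Bᵀ * R)ᵀ * R = Aᵀ * R - S := by
    simp only [Matrix.transpose_sub, Matrix.transpose_mul, hΓinv, hRsym,
      Matrix.transpose_transpose, Matrix.sub_mul, hS, Matrix.mul_assoc]
  have hRcl : R * (A - B * Γ⁻¹ * Bᵀ * R) = R * A - S := by
    simp only [Matrix.mul_sub, hS, Matrix.mul_assoc]
  have heq : w ⬝ᵥ ((Rd + (A - B * Γ⁻¹ * Bᵀ * R)ᵀ * R + R * (A - B * Γ⁻¹ * Bᵀ * R)) *ᵥ w) =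
      -(w ⬝ᵥ ((Q + κ • R + S) *ᵥ w)) := by
    rw [hScl, hRcl]
    simp only [Matrix.add_mulVec, Matrix.sub_mulVec, dotProduct_add, dotProduct_sub] at key ⊢
    linarith
  refine ⟨heq, ?_⟩
  have hQpos : 0 < w ⬝ᵥ (Q *ᵥ w) := by simpa using hQ.dotProduct_mulVec_pos hwne
  have hRpos : 0 ≤ w ⬝ᵥ (R *ᵥ w) := by simpa using hR.dotProduct_mulVec_nonneg w
  have hSpos : 0 ≤ w ⬝ᵥ (S *ᵥ w) := by
    have hPSD : ((Bᵀ * R)ᴴ * Γ⁻¹ * (Bᵀ * R)).PosSemidef :=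
      (hΓ.inv.posSemidef).conjTranspose_mul_mul_same (Bᵀ * R)
    have hSeq : S = (Bᵀ * R)ᴴ * Γ⁻¹ * (Bᵀ * R) := by
      simp only [conjTranspose_mul, Matrix.conjTranspose_eq_transpose_of_trivial,
        Matrix.transpose_mul, Matrix.transpose_transpose, hRsym, hS, Matrix.mul_assoc]
    rw [hSeq]
    simpa using hPSD.dotProduct_mulVec_nonneg w
  have : 0 < w ⬝ᵥ ((Q + κ • R + S) *ᵥ w) := by
    simp only [Matrix.add_mulVec, dotProduct_add, Matrix.smul_mulVec, dotProduct_smul,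
      smul_eq_mul]
    nlinarith
  linarith
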